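/- For all non-negative integers n, p, q, r, k with p ≥ n: ∑_{j=0}^{p} (-1)^j * C(n+p+q+k+1, p-j) * C(q+j, j) * C(q+k+1+j, k) * S_r(n+r+q+k+1+j, r+q+k+1+j) = C(n+p+q+k+1, n+k) * S_r(n+k+r, k+r), where S_r is the r-Stirling number of the second kind. -/

import Mathlib

open Finset Polynomial

/-- The unsigned `r`-Stirling number of the first kind. -/
def rStirling1 (r : ℕ) : ℕ → ℕ → ℕ
  | 0, k => if r = 0 ∧ k = 0 then 1 else 0
  | n + 1, k =>
    if n + 1 < r then 0
    else if n + 1 = r then (if k = r then 1 else 0)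
    else (if k = 0 then 0 else rStirling1 r n (k - 1)) + n * rStirling1 r n k

/-- The `r`-Stirling number of the second kind. -/
def rStirling2 (r : ℕ) : ℕ → ℕ → ℕ
  | 0, k => if r = 0 ∧ k = 0 then 1 else 0
  | n + 1, k =>
    if n + 1 < r then 0
    else if n + 1 = r then (if k = r then 1 else 0)
    else (if k = 0 then 0 else rStirling2 r n (k - 1)) + k * rStirling2 r n k

lemma qchoose_key (a e : ℕ) :
    ((a : ℚ) - e) * a.choose e = (e + 1) * a.choose (e + 1) := by
  rcases le_or_gt e a with h | h
  · have h2 := Nat.choose_succ_right_eq a e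
    have h3 : ((a.choose (e+1) : ℚ)) * (e+1) = (a.choose e) * ((a:ℚ) - e) := by
      rw [show ((a:ℚ) - e) = ((a - e : ℕ) : ℚ) by push_cast [Nat.cast_sub h]; ring]
      exact_mod_cast congrArg (fun x : ℕ => (x : ℚ)) h2
    linarith
  · rw [Nat.choose_eq_zero_of_lt h, Nat.choose_eq_zero_of_lt (by omega)]
    simp

lemma qprod_desc (e a : ℕ) :
    ∏ i ∈ range e, ((a : ℚ) - i) = e.factorial * a.choose e := by
  induction e with
  | zero => simp
  | succ e ih =>
    rw [prod_range_succ, ih]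
    push_cast [Nat.factorial_succ]
    linear_combination (e.factorial : ℚ) * qchoose_key a e

lemma qprod_negone (e : ℕ) :
    ∏ i ∈ range e, (-(1:ℚ) - i) = (-1) ^ e * e.factorial := by
  induction e with
  | zero => simp
  | succ e ih =>
    rw [prod_range_succ, ih]
    push_cast [Nat.factorial_succ, pow_succ]
    ring

/-- binomial polynomial: evaluates at x to "choose (c + x) e" -/
noncomputable def bp (c e : ℕ) : Polynomial ℚ :=
  Polynomial.C (1 / e.factorial : ℚ) * ∏ i ∈ range e, (Polynomial.X + Polynomial.C ((c : ℚ) - i))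

lemma bp_eval (c e : ℕ) (x : ℚ) :
    (bp c e).eval x = (1 / e.factorial : ℚ) * ∏ i ∈ range e, (x + ((c : ℚ) - i)) := by
  simp [bp, eval_prod]

lemma bp_natDegree (c e : ℕ) : (bp c e).natDegree = e := by
  have h1 : (∏ i ∈ range e, (Polynomial.X + Polynomial.C ((c : ℚ) - i))).Monic :=
    monic_prod_of_monic _ _ (fun i _ => monic_X_add_C _)
  rw [bp, natDegree_C_mul (by positivity)]
  rw [natDegree_prod _ _ (fun i _ => (monic_X_add_C _).ne_zero)]
  have h2 : ∑ i ∈ range e, (Polynomial.X + Polynomial.C ((c:ℚ) - (i:ℚ))).natDegree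
      = ∑ _i ∈ range e, 1 := Finset.sum_congr rfl (fun i _ => natDegree_X_add_C _)
  rw [h2]; simp

lemma bp_ne_zero (c e : ℕ) : bp c e ≠ 0 := by
  have h1 : (∏ i ∈ range e, (Polynomial.X + Polynomial.C ((c : ℚ) - i))).Monic :=
    monic_prod_of_monic _ _ (fun i _ => monic_X_add_C _)
  exact mul_ne_zero (by simp [Polynomial.C_eq_zero]; positivity) h1.ne_zero

lemma bp_eval_nat (c e j : ℕ) :
    (bp c e).eval (j : ℚ) = ((c + j).choose e : ℚ) := by
  rw [bp_eval]
  have h : ∀ i ∈ range e, (j : ℚ) + ((c : ℚ) - i) = ((c + j : ℕ) : ℚ) - i := by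
    intro i _; push_cast; ring
  rw [Finset.prod_congr rfl h, qprod_desc]
  field_simp

lemma bp_eval_neg_zero (c e s : ℕ) (h1 : s ≤ c) (h2 : c < s + e) :
    (bp c e).eval (-(s : ℚ)) = 0 := by
  rw [bp_eval]
  rw [Finset.prod_eq_zero (i := c - s) (Finset.mem_range.2 (by omega))]
  · ring
  · push_cast [Nat.cast_sub h1]; ring

lemma bp_eval_neg_le (c e s : ℕ) (h : s ≤ c) :
    (bp c e).eval (-(s : ℚ)) = ((c - s).choose e : ℚ) := by
  rw [bp_eval]
  have hc : ∀ i ∈ range e, -(s : ℚ) + ((c : ℚ) - i) = ((c - s : ℕ) : ℚ) - i := by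
    intro i _; push_cast [Nat.cast_sub h]; ring
  rw [Finset.prod_congr rfl hc, qprod_desc]
  field_simp

lemma bp_eval_neg_succ (c e : ℕ) :
    (bp c e).eval (-((c : ℚ) + 1)) = (-1) ^ e := by
  rw [bp_eval]
  have hc : ∀ i ∈ range e, -((c : ℚ) + 1) + ((c : ℚ) - i) = -(1:ℚ) - i := by
    intro i _; ring
  rw [Finset.prod_congr rfl hc, qprod_negone]
  field_simp

open fwdDiff in
lemma iter_fwdDiff_eval (N : ℕ) (P : Polynomial ℚ) (h : P.degree < (N : ℕ)) :
    (Δ_[(1:ℚ)])^[N] (fun x : ℚ => P.eval x) = fun _ => 0 := by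
  induction N generalizing P with
  | zero =>
    have hP : P = 0 := by
      rw [← Polynomial.degree_eq_bot]
      exact Nat.WithBot.lt_zero_iff.1 (by exact_mod_cast h)
    subst hP
    simp
  | succ N ih =>
    rw [Function.iterate_succ_apply]
    have hΔ : Δ_[(1:ℚ)] (fun x : ℚ => P.eval x)
        = fun x : ℚ => (P.comp (Polynomial.X + Polynomial.C 1) - P).eval x := by
      funext x
      simp [fwdDiff, eval_comp]
    rw [hΔ]
    apply ih
    by_cases h0 : P.degree ≤ 0
    · have hP := Polynomial.eq_C_of_degree_le_zero h0
      rw [hP, Polynomial.C_comp, sub_self]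
      exact lt_of_eq_of_lt Polynomial.degree_zero (WithBot.bot_lt_coe N)
    · push_neg at h0
      have hPne : P ≠ 0 := fun hh => by simp [hh] at h0
      have hmon : (Polynomial.X + Polynomial.C (1:ℚ)).Monic := monic_X_add_C 1
      have hdeg : (P.comp (Polynomial.X + Polynomial.C 1)).natDegree = P.natDegree := by
        rw [natDegree_comp, natDegree_X_add_C, mul_one]
      have hcompne : P.comp (Polynomial.X + Polynomial.C 1) ≠ 0 := by
        intro hh
        have := Polynomial.natDegree_pos_iff_degree_pos.2 h0
        rw [← hdeg, hh] at this
        simp at this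
      have hdeg' : (P.comp (Polynomial.X + Polynomial.C 1)).degree = P.degree := by
        rw [Polynomial.degree_eq_natDegree hcompne, Polynomial.degree_eq_natDegree hPne, hdeg]
      have hlc : (P.comp (Polynomial.X + Polynomial.C 1)).leadingCoeff = P.leadingCoeff := by
        rw [Polynomial.leadingCoeff_comp (by rw [natDegree_X_add_C]; exact one_ne_zero),
          Polynomial.leadingCoeff_X_add_C]
        simp
      have := Polynomial.degree_sub_lt hdeg' hcompne hlc
      rw [hdeg'] at this
      calc (P.comp (Polynomial.X + Polynomial.C 1) - P).degree < P.degree := this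
        _ ≤ (N : ℕ) := by
          have := h
          exact Order.le_of_lt_succ (by exact_mod_cast (by exact_mod_cast h : P.degree < ((N+1 : ℕ) : WithBot ℕ)))

lemma alt_sum_eval_zero (N : ℕ) (P : Polynomial ℚ) (h : P.degree < (N : ℕ)) :
    ∑ m ∈ range (N + 1), (-1 : ℚ) ^ m * (N.choose m) * P.eval (m : ℚ) = 0 := by
  have key := fwdDiff_iter_eq_sum_shift (1 : ℚ) (fun x : ℚ => P.eval x) N 0
  rw [iter_fwdDiff_eval N P h] at key
  have key2 : (0:ℚ) = ∑ k ∈ range (N + 1), (-1 : ℚ) ^ (N - k) * (N.choose k) * P.eval (k : ℚ) := by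
    rw [show (0:ℚ) = (fun _ : ℚ => (0:ℚ)) 0 from rfl, key]
    apply Finset.sum_congr rfl
    intro k _
    simp only [zsmul_eq_mul, nsmul_eq_mul, mul_one, zero_add]
    push_cast
    ring
  have key3 : (0:ℚ) = (-1:ℚ)^N * ∑ k ∈ range (N + 1), ((-1 : ℚ) ^ k * (N.choose k) * P.eval (k : ℚ)) := by
    rw [Finset.mul_sum, key2]
    apply Finset.sum_congr rfl
    intro k hk
    have hkN : k ≤ N := Nat.lt_succ_iff.1 (Finset.mem_range.1 hk)
    have hsgn : (-1 : ℚ) ^ (N - k) = (-1)^N * (-1)^k := by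
      have h2 : N + k = (N - k) + 2 * k := by omega
      have h3 : (-1:ℚ)^(N+k) = (-1:ℚ)^(N-k) * ((-1:ℚ)^2)^k := by
        rw [h2, pow_add, pow_mul]
      rw [pow_add] at h3
      simp only [neg_one_sq, one_pow, mul_one] at h3
      linarith [h3]
    rw [hsgn]; ring
  have hN : ((-1:ℚ)^N) ≠ 0 := by
    simp [pow_ne_zero]
  rcases mul_eq_zero.1 key3.symm with h1 | h1
  · exact absurd h1 hN
  · exact h1

lemma neg_one_pow_sub {N k : ℕ} (h : k ≤ N) : (-1 : ℚ) ^ (N - k) = (-1)^N * (-1)^k := by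
  have h2 : N + k = (N - k) + 2 * k := by omega
  have h3 : (-1:ℚ)^(N+k) = (-1:ℚ)^(N-k) * ((-1:ℚ)^2)^k := by
    rw [h2, pow_add, pow_mul]
  rw [pow_add] at h3
  simp only [neg_one_sq, one_pow, mul_one] at h3
  linarith [h3]

lemma lemmaB (n p q k d : ℕ) (hd : d ≤ n) (hnp : n ≤ p) :
    ∑ j ∈ range (p+1), (-1:ℚ)^j * ((n+p+q+k+1).choose (p-j)) * ((q+j).choose j) *
      ((q+k+1+j).choose k) * ((q+k+1+j+n).choose (n+d))
    = ((n+p+q+k+1).choose (n+k)) * ((k+n).choose (n+d)) := by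
  set N := n+p+q+k+1 with hN
  set G : Polynomial ℚ := bp q q * bp (q+k+1) k * bp (n+q+k+1) (n+d) with hG
  have hGne : G ≠ 0 := mul_ne_zero (mul_ne_zero (bp_ne_zero _ _) (bp_ne_zero _ _)) (bp_ne_zero _ _)
  have hGdeg : G.natDegree = q + k + (n+d) := by
    rw [hG, natDegree_mul (mul_ne_zero (bp_ne_zero _ _) (bp_ne_zero _ _)) (bp_ne_zero _ _),
      natDegree_mul (bp_ne_zero _ _) (bp_ne_zero _ _), bp_natDegree, bp_natDegree, bp_natDegree]
  set Q : Polynomial ℚ := G.comp (Polynomial.C (p:ℚ) - Polynomial.X) with hQ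
  have hlin : (Polynomial.C (p:ℚ) - Polynomial.X).natDegree = 1 := by
    rw [show Polynomial.C (p:ℚ) - Polynomial.X = -(Polynomial.X - Polynomial.C (p:ℚ)) by ring,
      natDegree_neg, natDegree_X_sub_C]
  have hQdeg : Q.degree < (N : ℕ) := by
    calc Q.degree ≤ (Q.natDegree : WithBot ℕ) := Polynomial.degree_le_natDegree
      _ < (N : ℕ) := by
          rw [hQ, natDegree_comp, hlin, mul_one, hGdeg]
          exact_mod_cast (by omega : q + k + (n+d) < N)
  have h0 := alt_sum_eval_zero N Q hQdeg
  have hQev : ∀ m : ℕ, Q.eval (m:ℚ) = G.eval ((p:ℚ) - m) := by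
    intro m
    rw [hQ, eval_comp]
    simp
  -- the summand
  set T : ℕ → ℚ := fun m => (-1:ℚ)^m * (N.choose m) * G.eval ((p:ℚ) - m) with hT
  have h1 : ∑ m ∈ range (N+1), T m = 0 := by
    rw [← h0]
    exact Finset.sum_congr rfl (fun m _ => by simp only [hT]; simp [hQev m])
  -- split the range
  have hsplit : ∑ m ∈ range (p+1), T m + ∑ m ∈ Ico (p+1) (N+1), T m = 0 := by
    rw [← h1, Finset.range_eq_Ico, Finset.sum_Ico_consecutive _ (by omega) (by omega),
      ← Finset.range_eq_Ico]
  -- tail is a single term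
  have htail : ∑ m ∈ Ico (p+1) (N+1), T m
      = (-1:ℚ)^(p+q+1) * (N.choose (p+q+1)) * ((-1)^q * ((n+k).choose (n+d))) := by
    rw [Finset.sum_eq_single_of_mem (p+q+1) (Finset.mem_Ico.2 ⟨by omega, by omega⟩)]
    · simp only [hT]
      have hs : (p:ℚ) - (p+q+1 : ℕ) = -((q:ℚ)+1) := by push_cast; ring
      rw [hs, hG]
      rw [eval_mul, eval_mul, bp_eval_neg_succ]
      have h2 : (bp (q+k+1) k).eval (-((q:ℚ)+1)) = 1 := by
        have := bp_eval_neg_le (q+k+1) k (q+1) (by omega)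
        rw [show ((q+1:ℕ):ℚ) = (q:ℚ)+1 by push_cast; ring] at this
        rw [this, show q+k+1-(q+1) = k by omega, Nat.choose_self, Nat.cast_one]
      have h3 : (bp (n+q+k+1) (n+d)).eval (-((q:ℚ)+1)) = ((n+k).choose (n+d) : ℚ) := by
        have := bp_eval_neg_le (n+q+k+1) (n+d) (q+1) (by omega)
        rw [show ((q+1:ℕ):ℚ) = (q:ℚ)+1 by push_cast; ring] at this
        rw [this, show n+q+k+1-(q+1) = n+k by omega]
      rw [h2, h3]
      ring
    · intro m hm hne
      simp only [hT]
      obtain ⟨hm1, hm2⟩ := Finset.mem_Ico.1 hm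
      have hs : (p:ℚ) - (m : ℕ) = -(((m - p : ℕ)):ℚ) := by
        push_cast [Nat.cast_sub (by omega : p ≤ m)]; ring
      have hzero : G.eval ((p:ℚ) - m) = 0 := by
        rw [hs, hG, eval_mul, eval_mul]
        rcases (by omega : (p+1 ≤ m ∧ m ≤ p+q) ∨ (p+q+2 ≤ m ∧ m ≤ p+q+k+1)
            ∨ (p+q+k+2 ≤ m ∧ m ≤ N)) with ⟨ha, hb⟩ | ⟨ha, hb⟩ | ⟨ha, hb⟩
        · rw [bp_eval_neg_zero q q (m-p) (by omega) (by omega)]; ring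
        · rw [bp_eval_neg_zero (q+k+1) k (m-p) (by omega) (by omega)]; ring
        · rw [bp_eval_neg_zero (n+q+k+1) (n+d) (m-p) (by omega) (by omega)]; ring
      rw [hzero]; ring
  -- reflect the head
  have hhead : ∑ m ∈ range (p+1), T m
      = (-1:ℚ)^p * ∑ j ∈ range (p+1), (-1:ℚ)^j * (N.choose (p-j)) * ((q+j).choose j) *
          ((q+k+1+j).choose k) * ((q+k+1+j+n).choose (n+d)) := by
    rw [← Finset.sum_range_reflect T (p+1), Finset.mul_sum]
    apply Finset.sum_congr rfl
    intro j hj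
    have hjp : j ≤ p := Nat.lt_succ_iff.1 (Finset.mem_range.1 hj)
    simp only [hT]
    simp only [show p + 1 - 1 - j = p - j from by omega]
    have hx : (p:ℚ) - ((p - j : ℕ):ℚ) = (j:ℚ) := by
      push_cast [Nat.cast_sub hjp]; ring
    rw [hx, hG, eval_mul, eval_mul, bp_eval_nat, bp_eval_nat, bp_eval_nat]
    rw [neg_one_pow_sub hjp]
    have hsym : (q+j).choose q = (q+j).choose j := by
      rw [← Nat.choose_symm (by omega : j ≤ q+j)]
      congr 1
      omega
    have harg : n+q+k+1+j = q+k+1+j+n := by omega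
    rw [hsym, harg]
    ring
  -- combine
  have hfinal : (-1:ℚ)^p * ∑ j ∈ range (p+1), (-1:ℚ)^j * (N.choose (p-j)) * ((q+j).choose j) *
      ((q+k+1+j).choose k) * ((q+k+1+j+n).choose (n+d))
      = (-1:ℚ)^p * ((N.choose (p+q+1)) * ((n+k).choose (n+d))) := by
    rw [← hhead]
    have : ∑ m ∈ range (p+1), T m = -∑ m ∈ Ico (p+1) (N+1), T m := by linarith [hsplit]
    rw [this, htail]
    have hq1 : (-1:ℚ)^q * (-1:ℚ)^q = 1 := by
      rw [← pow_add, show q+q = 2*q from by omega, pow_mul]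
      norm_num
    rw [show p+q+1 = p+q+1 from rfl, pow_add, pow_succ, pow_add]
    linear_combination ((-1:ℚ)^p * ((N.choose (p+q+1)):ℚ) * (((n+k).choose (n+d)):ℚ)) * hq1
  have hcancel := mul_left_cancel₀ (by positivity : ((-1:ℚ)^p) ≠ 0) hfinal
  rw [hcancel]
  have hsymm2 : N.choose (p+q+1) = N.choose (n+k) := by
    rw [← Nat.choose_symm (by omega : p+q+1 ≤ N)]
    congr 1
    omega
  rw [hsymm2, show k+n = n+k from by omega]


lemma rS2_step (r m c : ℕ) (h : r ≤ m) :
    rStirling2 r (m+1) c = (if c = 0 then 0 else rStirling2 r m (c-1)) + c * rStirling2 r m c := by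
  rw [rStirling2]
  rw [if_neg (by omega), if_neg (by omega)]

lemma rS2_lt (r : ℕ) : ∀ m c, c < r → rStirling2 r m c = 0 := by
  intro m
  induction m with
  | zero => intro c hc; rw [rStirling2]; rw [if_neg (by omega)]
  | succ m ih =>
    intro c hc
    rw [rStirling2]
    split_ifs with h1 h2 h3 h4
    · rfl
    · omega
    · rfl
    · simp [ih c hc]
    · simp [ih c hc, ih (c-1) (by omega)]

lemma rS2_gt (r : ℕ) : ∀ m c, m < c → rStirling2 r m c = 0 := by
  intro m
  induction m with
  | zero => intro c hc; rw [rStirling2]; rw [if_neg (by omega)]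
  | succ m ih =>
    intro c hc
    rw [rStirling2]
    split_ifs with h1 h2 h3 h4
    · rfl
    · omega
    · rfl
    · omega
    · simp [ih c (by omega), ih (c-1) (by omega)]

lemma rS2_diag (r : ℕ) : ∀ t, rStirling2 r (r+t) (r+t) = 1 := by
  intro t
  induction t with
  | zero =>
    cases r with
    | zero => rw [rStirling2]; simp
    | succ r' => rw [rStirling2]; rw [if_neg (by omega), if_pos rfl, if_pos rfl]
  | succ t ih =>
    rw [show r+(t+1) = (r+t)+1 from rfl, rS2_step r (r+t) (r+t+1) (by omega)]
    rw [if_neg (by omega), show r+t+1-1 = r+t from by omega, ih,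
      rS2_gt r (r+t) (r+t+1) (by omega), mul_zero, add_zero]

lemma gsum (r n : ℕ) : ∀ t, rStirling2 r ((n+1)+r+t) (r+t)
    = ∑ s ∈ range (t+1), (r+s) * rStirling2 r (n+r+s) (r+s) := by
  intro t
  induction t with
  | zero =>
    rw [show (n+1)+r+0 = (n+r)+1 from by omega, rS2_step r (n+r) (r+0) (by omega)]
    simp only [range_one, sum_singleton, add_zero]
    rcases Nat.eq_zero_or_pos r with hr | hr
    · subst hr; simp
    · rw [if_neg (by omega), rS2_lt r (n+r) (r-1) (by omega)]
      simp
  | succ t ih =>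
    rw [show (n+1)+r+(t+1) = ((n+1)+r+t)+1 from by omega,
      rS2_step r ((n+1)+r+t) (r+(t+1)) (by omega),
      if_neg (by omega), show r+(t+1)-1 = r+t from by omega, ih]
    conv_rhs => rw [Finset.sum_range_succ]
    rw [show n+r+(t+1) = n+1+r+t from by omega]


lemma key_sum (r n d : ℕ) : ∀ t, ∑ s ∈ range (t+1), ((r:ℚ)+s) * (((s+n).choose (n+d)) : ℚ)
    = (n+d+1 : ℚ) * (((t+n+1).choose (n+d+2)) : ℚ) + ((r:ℚ)+d) * (((t+n+1).choose (n+d+1)) : ℚ) := by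
  intro t
  induction t with
  | zero =>
    rw [range_one, Finset.sum_singleton]
    have c2 : (0+n+1).choose (n+d+2) = 0 := Nat.choose_eq_zero_of_lt (by omega)
    rcases Nat.eq_zero_or_pos d with hd | hd
    · subst hd
      have c1 : (0+n).choose (n+0) = 1 := by simp
      have c3 : (0+n+1).choose (n+0+1) = 1 := by
        rw [show 0+n+1 = n+0+1 from by omega, Nat.choose_self]
      rw [c1, c2, c3]
      push_cast
      ring
    · have c1 : (0+n).choose (n+d) = 0 := Nat.choose_eq_zero_of_lt (by omega)
      have c3 : (0+n+1).choose (n+d+1) = 0 := Nat.choose_eq_zero_of_lt (by omega)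
      rw [c1, c2, c3]
      push_cast
      ring
  | succ t ih =>
    rw [Finset.sum_range_succ, ih]
    have p1 : (t+n+1+1).choose (n+d+2) = (t+n+1).choose (n+d+1) + (t+n+1).choose (n+d+2) :=
      Nat.choose_succ_succ _ _
    have p2 : (t+n+1+1).choose (n+d+1) = (t+n+1).choose (n+d) + (t+n+1).choose (n+d+1) :=
      Nat.choose_succ_succ _ _
    have hk := qchoose_key (t+n+1) (n+d)
    rw [show t+1+n+1 = t+n+1+1 from by omega, p1, p2,
      show t+1+n = t+n+1 from by omega]
    push_cast
    push_cast at hk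
    linarith [hk]

def GoodF (n : ℕ) (f : ℕ → ℚ) : Prop :=
  ∃ a : ℕ → ℚ, ∀ t, f t = ∑ d ∈ range (n+1), a d * (((t+n).choose (n+d)) : ℚ)

lemma good_g (r n : ℕ) : GoodF n (fun t => (rStirling2 r (n+r+t) (r+t) : ℚ)) := by
  induction n with
  | zero =>
    refine ⟨fun _ => 1, fun t => ?_⟩
    have h : rStirling2 r (0+r+t) (r+t) = 1 := by
      rw [show 0+r+t = r+t from by omega]; exact rS2_diag r t
    simp [h, rS2_diag r t]
  | succ n ih =>
    obtain ⟨a, ha0⟩ := ih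
    have ha : ∀ u, (rStirling2 r (n+r+u) (r+u) : ℚ)
        = ∑ d ∈ range (n+1), a d * (((u+n).choose (n+d)) : ℚ) := ha0
    refine ⟨fun e => (if e = 0 then 0 else a (e-1) * ((n:ℚ)+e)) +
      (if e ≤ n then a e * ((r:ℚ)+e) else 0), fun t => ?_⟩
    have h1 := gsum r n t
    have h1q : (rStirling2 r (n+1+r+t) (r+t) : ℚ)
        = ∑ s ∈ range (t+1), ((r:ℚ)+(s:ℚ)) * (rStirling2 r (n+r+s) (r+s) : ℚ) := by
      have h2 := congrArg (fun x : ℕ => (x:ℚ)) h1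
      push_cast at h2
      exact_mod_cast h2
    show (rStirling2 r (n+1+r+t) (r+t) : ℚ) = _
    rw [h1q]
    have h3 : ∀ s ∈ range (t+1), ((r:ℚ)+(s:ℚ)) * (rStirling2 r (n+r+s) (r+s) : ℚ)
        = ∑ d ∈ range (n+1), a d * (((r:ℚ)+s) * (((s+n).choose (n+d)) : ℚ)) := by
      intro s _
      rw [ha s]
      rw [Finset.mul_sum]
      exact Finset.sum_congr rfl (fun d _ => by ring)
    rw [Finset.sum_congr rfl h3, Finset.sum_comm]
    have h4 : ∀ d ∈ range (n+1), ∑ s ∈ range (t+1), a d * (((r:ℚ)+s) * (((s+n).choose (n+d)) : ℚ))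
        = a d * ((n+d+1 : ℚ) * (((t+n+1).choose (n+d+2)) : ℚ)
            + ((r:ℚ)+d) * (((t+n+1).choose (n+d+1)) : ℚ)) := by
      intro d _
      rw [← Finset.mul_sum, key_sum r n d t]
    rw [Finset.sum_congr rfl h4]
    -- now expand the RHS (the b-sum)
    rw [Finset.sum_congr rfl (fun e _ => add_mul (if e = 0 then (0:ℚ) else a (e-1) * ((n:ℚ)+e))
      (if e ≤ n then a e * ((r:ℚ)+e) else 0) (((t+(n+1)).choose ((n+1)+e) : ℚ))),
      Finset.sum_add_distrib]
    have h5 : ∑ e ∈ range (n+2), (if e = 0 then (0:ℚ) else a (e-1) * ((n:ℚ)+e)) *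
          (((t+(n+1)).choose ((n+1)+e) : ℚ))
        = ∑ d ∈ range (n+1), a d * (((n:ℚ)+d+1) * (((t+n+1).choose (n+d+2)) : ℚ)) := by
      rw [Finset.sum_range_succ']
      norm_num
      apply Finset.sum_congr rfl
      intro d _
      rw [show t+(n+1) = t+n+1 from by omega, show n+1+(d+1) = n+d+2 from by omega]
      ring
    have h6 : ∑ e ∈ range (n+2), (if e ≤ n then a e * ((r:ℚ)+e) else 0) *
          (((t+(n+1)).choose ((n+1)+e) : ℚ))
        = ∑ d ∈ range (n+1), a d * (((r:ℚ)+d) * (((t+n+1).choose (n+d+1)) : ℚ)) := by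
      rw [Finset.sum_range_succ, if_neg (by omega), zero_mul, add_zero]
      apply Finset.sum_congr rfl
      intro d hd
      rw [if_pos (by exact Nat.lt_succ_iff.1 (Finset.mem_range.1 hd))]
      rw [show t+(n+1) = t+n+1 from by omega, show (n+1)+d = n+d+1 from by omega]
      ring
    rw [h5, h6, ← Finset.sum_add_distrib]
    exact Finset.sum_congr rfl (fun d _ => by ring)



theorem rStirling2_selfdual_identity (n p q r k : ℕ) (hp : n ≤ p) :
    ∑ j ∈ Finset.range (p + 1),
      (-1 : ℤ) ^ j * ((n + p + q + k + 1).choose (p - j)) * ((q + j).choose j) *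
        ((q + k + 1 + j).choose k) * rStirling2 r (n + r + q + k + 1 + j) (r + q + k + 1 + j)
    = ((n + p + q + k + 1).choose (n + k) : ℤ) * rStirling2 r (n + k + r) (k + r) := by
  obtain ⟨a, ha0⟩ := good_g r n
  have ha : ∀ u, (rStirling2 r (n+r+u) (r+u) : ℚ)
      = ∑ d ∈ Finset.range (n+1), a d * (((u+n).choose (n+d)) : ℚ) := ha0
  have hQ : ∑ j ∈ Finset.range (p+1), (-1:ℚ)^j * ((n+p+q+k+1).choose (p-j)) * ((q+j).choose j) *
      ((q+k+1+j).choose k) * (rStirling2 r (n+r+q+k+1+j) (r+q+k+1+j) : ℚ)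
      = ((n+p+q+k+1).choose (n+k) : ℚ) * (rStirling2 r (n+k+r) (k+r) : ℚ) := by
    have hL : ∀ j ∈ Finset.range (p+1), (-1:ℚ)^j * ((n+p+q+k+1).choose (p-j)) * ((q+j).choose j) *
        ((q+k+1+j).choose k) * (rStirling2 r (n+r+q+k+1+j) (r+q+k+1+j) : ℚ)
        = ∑ d ∈ Finset.range (n+1), a d * ((-1:ℚ)^j * ((n+p+q+k+1).choose (p-j)) * ((q+j).choose j) *
            ((q+k+1+j).choose k) * (((q+k+1+j+n).choose (n+d)) : ℚ)) := by
      intro j _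
      have e1 : rStirling2 r (n+r+q+k+1+j) (r+q+k+1+j)
          = rStirling2 r (n+r+(q+k+1+j)) (r+(q+k+1+j)) := by
        rw [show n+r+q+k+1+j = n+r+(q+k+1+j) from by omega,
          show r+q+k+1+j = r+(q+k+1+j) from by omega]
      rw [e1, ha (q+k+1+j), Finset.mul_sum]
      apply Finset.sum_congr rfl
      intro d _
      ring
    rw [Finset.sum_congr rfl hL, Finset.sum_comm]
    have hR : ∀ d ∈ Finset.range (n+1), ∑ j ∈ Finset.range (p+1),
        a d * ((-1:ℚ)^j * ((n+p+q+k+1).choose (p-j)) * ((q+j).choose j) *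
          ((q+k+1+j).choose k) * (((q+k+1+j+n).choose (n+d)) : ℚ))
        = a d * (((n+p+q+k+1).choose (n+k) : ℚ) * (((k+n).choose (n+d)):ℚ)) := by
      intro d hd
      rw [← Finset.mul_sum, lemmaB n p q k d (Nat.lt_succ_iff.1 (Finset.mem_range.1 hd)) hp]
    rw [Finset.sum_congr rfl hR]
    have hg : (rStirling2 r (n+k+r) (k+r) : ℚ)
        = ∑ d ∈ Finset.range (n+1), a d * (((k+n).choose (n+d)):ℚ) := by
      have h2 := ha k
      rw [show n+k+r = n+r+k from by omega, show k+r = r+k from by omega, h2]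
    rw [hg, Finset.mul_sum]
    apply Finset.sum_congr rfl
    intro d _
    ring
  exact_mod_cast hQ
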